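/- Let G be a chordal graph, x a vertex, r a nonnegative integer, and u, v two distinct vertices in the ball N^r[x]. If there is a path P connecting u and v with P ∩ N^r[x] = {u, v}, then u and v are adjacent. -/

import Mathlib

open SimpleGraph

variable {V : Type*}

/-- Distance from a vertex to a set of vertices. -/
noncomputable def setDist (G : SimpleGraph V) (x : V) (S : Set V) : ℕ :=
  sInf (G.dist x '' S)

/-- Eccentricity of a set of vertices. -/
noncomputable def eccSet (G : SimpleGraph V) [Fintype V] (S : Set V) : ℕ :=
  Finset.univ.sup fun v => setDist G v S

/-- Eccentricity of a vertex. -/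
noncomputable def eccV (G : SimpleGraph V) [Fintype V] (v : V) : ℕ :=
  Finset.univ.sup fun u => G.dist v u

/-- Diameter of a graph. -/
noncomputable def diamG (G : SimpleGraph V) [Fintype V] : ℕ :=
  Finset.univ.sup fun v => eccV G v

/-- Projection of a vertex onto a set. -/
def proj (G : SimpleGraph V) (x : V) (S : Set V) : Set V :=
  {u ∈ S | G.dist x u = setDist G x S}

/-- The interval between two vertices. -/
def interval (G : SimpleGraph V) (a b : V) : Set V :=
  {w | G.dist a b = G.dist a w + G.dist w b}

/-- Distance-hereditary: distances in connected induced subgraphs equal distances in `G`. -/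
def DistHereditary (G : SimpleGraph V) : Prop :=
  ∀ S : Set V, (G.induce S).Connected →
    ∀ u v : S, (G.induce S).dist u v = G.dist u.1 v.1

/-- A walk is a shortest path. -/
def IsShortestPath (G : SimpleGraph V) {a b : V} (p : G.Walk a b) : Prop :=
  p.IsPath ∧ p.length = G.dist a b

/-- A graph is chordal if every cycle with at least four edges has a chord:
an edge of `G` between two vertices of the cycle that is not an edge of the cycle. -/
def IsChordal (G : SimpleGraph V) : Prop :=
  ∀ (v : V) (c : G.Walk v v), c.IsCycle → 4 ≤ c.length →
    ∃ a b : V, a ∈ c.support ∧ b ∈ c.support ∧ G.Adj a b ∧ s(a, b) ∉ c.edges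

section AuxChordal
variable {V : Type*} {G : SimpleGraph V}

lemma adj_of_length_one {u v : V} (p : G.Walk u v) (h : p.length = 1) : G.Adj u v := by
  cases p with
  | nil => simp at h
  | cons h' q =>
    have h0 : q.length = 0 := by simpa using h
    have hw := SimpleGraph.Walk.eq_of_length_eq_zero h0
    exact hw ▸ h'

lemma edge_mem_of_length_one {u v : V} (p : G.Walk u v) (h : p.length = 1) :
    s(u, v) ∈ p.edges := by
  cases p with
  | nil => simp at h
  | cons h' q =>
    have h0 : q.length = 0 := by simpa using h
    have hw := SimpleGraph.Walk.eq_of_length_eq_zero h0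
    subst hw
    simp

lemma exists_decomp [DecidableEq V] {u v c d : V} (P : G.Walk u v) (hc : c ∈ P.support) (hd : d ∈ P.support) :
    ∃ (c₁ d₁ : V) (A : G.Walk u c₁) (M : G.Walk c₁ d₁) (B : G.Walk d₁ v),
      A.append (M.append B) = P ∧ ((c₁ = c ∧ d₁ = d) ∨ (c₁ = d ∧ d₁ = c)) := by
  by_cases hmem : d ∈ (P.dropUntil c hc).support
  · exact ⟨c, d, P.takeUntil c hc, (P.dropUntil c hc).takeUntil d hmem,
      (P.dropUntil c hc).dropUntil d hmem,
      by rw [Walk.take_spec, Walk.take_spec], Or.inl ⟨rfl, rfl⟩⟩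
  · have hd' : d ∈ (P.takeUntil c hc).support := by
      have h := P.take_spec hc
      rw [← h, Walk.mem_support_append_iff] at hd
      tauto
    exact ⟨d, c, (P.takeUntil c hc).takeUntil d hd', (P.takeUntil c hc).dropUntil d hd',
      P.dropUntil c hc,
      by rw [Walk.append_assoc, Walk.take_spec, Walk.take_spec], Or.inr ⟨rfl, rfl⟩⟩

lemma shortcut [DecidableEq V] {u v c d : V} (P : G.Walk u v) (hP : P.IsPath)
    (hc : c ∈ P.support) (hd : d ∈ P.support) (hcd : G.Adj c d) (he : s(c, d) ∉ P.edges) :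
    ∃ P' : G.Walk u v, P'.IsPath ∧ (∀ z ∈ P'.support, z ∈ P.support) ∧ P'.length < P.length := by
  obtain ⟨c₁, d₁, A, M, B, hPeq, hor⟩ := exists_decomp P hc hd
  have hadj : G.Adj c₁ d₁ := by
    rcases hor with ⟨h1, h2⟩ | ⟨h1, h2⟩ <;> subst h1 <;> subst h2
    · exact hcd
    · exact hcd.symm
  have hedge : s(c₁, d₁) = s(c, d) := by
    rcases hor with ⟨h1, h2⟩ | ⟨h1, h2⟩ <;> subst h1 <;> subst h2
    · rfl
    · exact Sym2.eq_swap
  have hM0 : M.length ≠ 0 := fun h0 => hadj.ne (Walk.eq_of_length_eq_zero h0)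
  have hM1 : M.length ≠ 1 := by
    intro h1
    apply he
    rw [← hedge, ← hPeq, Walk.edges_append, Walk.edges_append]
    have h := edge_mem_of_length_one M h1
    simp only [List.mem_append]
    tauto
  -- support decomposition of P
  have hsupMB : (M.append B).support.tail = M.support.tail ++ B.support.tail := by
    rw [Walk.support_append, M.support_eq_cons]
    rfl
  have hsup : P.support = A.support ++ (M.support.tail ++ B.support.tail) := by
    rw [← hPeq, Walk.support_append, hsupMB]
  have hnd : (A.support ++ (M.support.tail ++ B.support.tail)).Nodup := by
    rw [← hsup]; exact hP.support_nodup
  rw [List.nodup_append] at hnd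
  obtain ⟨hndA, hndMB, hdisjA⟩ := hnd
  rw [List.nodup_append] at hndMB
  obtain ⟨hndM, hndB, hdisjMB⟩ := hndMB
  have hd₁M : d₁ ∈ M.support.tail := by
    have h := M.end_mem_support
    rw [M.support_eq_cons, List.mem_cons] at h
    rcases h with h | h
    · exact absurd h.symm hadj.ne
    · exact h
  have hBsup : B.support = d₁ :: B.support.tail := B.support_eq_cons
  refine ⟨A.append (Walk.cons hadj B), ?_, ?_, ?_⟩
  · apply Walk.IsPath.mk'
    rw [Walk.support_append, Walk.support_cons, List.tail_cons]
    rw [List.nodup_append]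
    refine ⟨hndA, ?_, ?_⟩
    · rw [hBsup, List.nodup_cons]
      exact ⟨fun h => hdisjMB d₁ hd₁M d₁ h rfl, hndB⟩
    · intro z hz y hz' hzy
      rw [hBsup, List.mem_cons] at hz'
      rcases hz' with rfl | hz'
      · exact hdisjA z hz _ (List.mem_append_left _ hd₁M) hzy
      · exact hdisjA z hz _ (List.mem_append_right _ hz') hzy
  · intro z hz
    rw [Walk.support_append, Walk.support_cons, List.tail_cons] at hz
    rw [hsup]
    rcases List.mem_append.mp hz with hz | hz
    · exact List.mem_append_left _ hz
    · rw [hBsup, List.mem_cons] at hz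
      rcases hz with rfl | hz
      · exact List.mem_append_right _ (List.mem_append_left _ hd₁M)
      · exact List.mem_append_right _ (List.mem_append_right _ hz)
  · have h1 : P.length = A.length + (M.length + B.length) := by
      rw [← hPeq, Walk.length_append, Walk.length_append]
    have h2 : (A.append (Walk.cons hadj B)).length = A.length + (B.length + 1) := by
      rw [Walk.length_append, Walk.length_cons]
    omega

lemma apex_lemma (hch : ∀ (v : V) (c : G.Walk v v), c.IsCycle → 4 ≤ c.length →
      ∃ a b : V, a ∈ c.support ∧ b ∈ c.support ∧ G.Adj a b ∧ s(a, b) ∉ c.edges)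
    (hconn : G.Connected) (x : V) (r : ℕ) :
    ∀ n : ℕ, ∀ (u v a : V) (P : G.Walk u v), P.length ≤ n → P.IsPath → u ≠ v →
      a ∉ P.support → G.Adj a u → G.Adj a v → G.dist x a ≤ r →
      (∀ z ∈ P.support, G.dist x z ≤ r + 1 → z = u ∨ z = v) → G.Adj u v := by
  classical
  intro n
  induction n using Nat.strong_induction_on with
  | _ n ih =>
  intro u v a P hn hP huv ha hau hav hxa hint
  rcases Nat.lt_or_ge P.length 2 with h2 | h2
  · interval_cases h : P.length
    · exact absurd (Walk.eq_of_length_eq_zero h) huv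
    · exact adj_of_length_one P h
  · have huPt : u ∉ P.support.tail := by
      have h := hP.support_nodup
      rw [P.support_eq_cons, List.nodup_cons] at h
      exact h.1
    set C : G.Walk u u := P.append (Walk.cons hav.symm (Walk.cons hau Walk.nil)) with hC
    have hCsup : C.support = P.support ++ [a, u] := by
      rw [hC, Walk.support_append]
      simp
    have hCtail : C.support.tail = P.support.tail ++ [a, u] := by
      rw [hCsup, P.support_eq_cons]
      rfl
    have hCed : C.edges = P.edges ++ [s(v, a), s(a, u)] := by
      rw [hC, Walk.edges_append]
      simp
    have hClen : C.length = P.length + 2 := by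
      rw [hC, Walk.length_append]
      simp
    have hcyc : C.IsCycle := by
      rw [Walk.isCycle_def]
      refine ⟨⟨?_⟩, ?_, ?_⟩
      · rw [hCed, List.nodup_append]
        refine ⟨hP.edges_nodup, ?_, ?_⟩
        · simp only [List.nodup_cons, List.mem_singleton, List.not_mem_nil, not_false_iff,
            List.nodup_nil, and_true]
          intro h
          rw [Sym2.eq_iff] at h
          rcases h with ⟨h1, h2⟩ | ⟨h1, h2⟩
          · exact hav.ne h1.symm
          · exact huv h1.symm
        · intro e heP e' heQ hee
          subst hee
          simp only [List.mem_cons, List.mem_singleton, List.not_mem_nil, or_false] at heQ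
          rcases heQ with rfl | rfl
          · exact ha (P.snd_mem_support_of_mem_edges heP)
          · exact ha (P.fst_mem_support_of_mem_edges heP)
      · intro h
        rw [h] at hClen
        simp at hClen
      · rw [hCtail, List.nodup_append]
        refine ⟨hP.support_nodup.tail, by simp [hau.ne], ?_⟩
        intro z hz w hz' hzw
        subst hzw
        simp only [List.mem_cons, List.mem_singleton, List.not_mem_nil, or_false] at hz'
        rcases hz' with rfl | rfl
        · exact ha (List.mem_of_mem_tail hz)
        · exact huPt hz
    obtain ⟨c, d, hcC, hdC, hcd, he⟩ := hch u C hcyc (by omega)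
    have hmem : ∀ z, z ∈ C.support → z ∈ P.support ∨ z = a := by
      intro z hz
      rw [hCsup, List.mem_append] at hz
      rcases hz with hz | hz
      · exact Or.inl hz
      · simp only [List.mem_cons, List.mem_singleton, List.not_mem_nil, or_false] at hz
        rcases hz with rfl | rfl
        · exact Or.inr rfl
        · exact Or.inl P.start_mem_support
    have keydist : ∀ w, G.Adj a w → G.dist x w ≤ r + 1 := by
      intro w haw
      calc G.dist x w ≤ G.dist x a + G.dist a w := hconn.dist_triangle
        _ ≤ r + 1 := by
          have h1 : G.dist a w ≤ 1 := by
            have := SimpleGraph.dist_le (Walk.cons haw Walk.nil)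
            simpa using this
          omega
    have hsva : s(v, a) ∈ C.edges := by rw [hCed]; simp
    have hsau : s(a, u) ∈ C.edges := by rw [hCed]; simp
    rcases hmem c hcC with hcP | rfl
    · rcases hmem d hdC with hdP | rfl
      · -- both in P : shortcut and recurse
        have heP : s(c, d) ∉ P.edges := fun hmemE =>
          he (by rw [hCed]; exact List.mem_append_left _ hmemE)
        obtain ⟨P', hP', hsub, hlt⟩ := shortcut P hP hcP hdP hcd heP
        exact ih P'.length (lt_of_lt_of_le hlt hn) u v a P' le_rfl hP' huv
          (fun hz => ha (hsub a hz)) hau hav hxa (fun z hz hle => hint z (hsub z hz) hle)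
      · -- d = a
        rcases hint c hcP (keydist c hcd.symm) with rfl | rfl
        · exact absurd (by rw [Sym2.eq_swap]; exact hsau) he
        · exact absurd hsva he
    · rcases hmem d hdC with hdP | rfl
      · rcases hint d hdP (keydist d hcd) with rfl | rfl
        · exact absurd hsau he
        · exact absurd (by rw [Sym2.eq_swap]; exact hsva) he
      · exact absurd rfl hcd.ne

lemma apex2_lemma (hch : ∀ (v : V) (c : G.Walk v v), c.IsCycle → 4 ≤ c.length →
      ∃ a b : V, a ∈ c.support ∧ b ∈ c.support ∧ G.Adj a b ∧ s(a, b) ∉ c.edges)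
    (hconn : G.Connected) (x : V) (r : ℕ) :
    ∀ n : ℕ, ∀ (u v a b : V) (P : G.Walk u v), P.length ≤ n → P.IsPath → u ≠ v →
      a ∉ P.support → b ∉ P.support → G.Adj a u → G.Adj b v → G.Adj a b →
      a ≠ v → b ≠ u → G.dist x a ≤ r → G.dist x b ≤ r →
      (∀ z ∈ P.support, G.dist x z ≤ r + 1 → z = u ∨ z = v) → G.Adj u v := by
  classical
  intro n
  induction n using Nat.strong_induction_on with
  | _ n ih =>
  intro u v a b P hn hP huv ha hb hau hbv hab hav hbu hxa hxb hint
  rcases Nat.lt_or_ge P.length 2 with h2 | h2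
  · interval_cases h : P.length
    · exact absurd (Walk.eq_of_length_eq_zero h) huv
    · exact adj_of_length_one P h
  · have huPt : u ∉ P.support.tail := by
      have h := hP.support_nodup
      rw [P.support_eq_cons, List.nodup_cons] at h
      exact h.1
    set C : G.Walk u u :=
      P.append (Walk.cons hbv.symm (Walk.cons hab.symm (Walk.cons hau Walk.nil))) with hC
    have hCsup : C.support = P.support ++ [b, a, u] := by
      rw [hC, Walk.support_append]
      simp
    have hCtail : C.support.tail = P.support.tail ++ [b, a, u] := by
      rw [hCsup, P.support_eq_cons]
      rfl
    have hCed : C.edges = P.edges ++ [s(v, b), s(b, a), s(a, u)] := by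
      rw [hC, Walk.edges_append]
      simp
    have hClen : C.length = P.length + 3 := by
      rw [hC, Walk.length_append]
      simp
    have hcyc : C.IsCycle := by
      rw [Walk.isCycle_def]
      refine ⟨⟨?_⟩, ?_, ?_⟩
      · rw [hCed, List.nodup_append]
        refine ⟨hP.edges_nodup, ?_, ?_⟩
        · simp only [List.nodup_cons, List.mem_cons, List.mem_singleton, List.not_mem_nil,
            not_false_iff, List.nodup_nil, and_true, not_or]
          refine ⟨⟨?_, ?_⟩, ?_⟩
          · intro h
            rw [Sym2.eq_iff] at h
            rcases h with ⟨h1, h2⟩ | ⟨h1, h2⟩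
            · exact hab.ne h2.symm
            · exact hav h1.symm
          · intro h
            rw [Sym2.eq_iff] at h
            rcases h with ⟨h1, h2⟩ | ⟨h1, h2⟩
            · exact hav h1.symm
            · exact huv h1.symm
          · intro h
            rw [Sym2.eq_iff] at h
            rcases h with ⟨h1, h2⟩ | ⟨h1, h2⟩
            · exact hab.ne h1.symm
            · exact hbu h1
        · intro e heP e' heQ hee
          subst hee
          simp only [List.mem_cons, List.mem_singleton, List.not_mem_nil, or_false] at heQ
          rcases heQ with rfl | rfl | rfl
          · exact hb (P.snd_mem_support_of_mem_edges heP)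
          · exact hb (P.fst_mem_support_of_mem_edges heP)
          · exact ha (P.fst_mem_support_of_mem_edges heP)
      · intro h
        rw [h] at hClen
        simp at hClen
      · rw [hCtail, List.nodup_append]
        refine ⟨hP.support_nodup.tail, ?_, ?_⟩
        · simp [hab.ne', hau.ne, hbu]
        · intro z hz w hz' hzw
          subst hzw
          simp only [List.mem_cons, List.mem_singleton, List.not_mem_nil, or_false] at hz'
          rcases hz' with rfl | rfl | rfl
          · exact hb (List.mem_of_mem_tail hz)
          · exact ha (List.mem_of_mem_tail hz)
          · exact huPt hz
    obtain ⟨c, d, hcC, hdC, hcd, he⟩ := hch u C hcyc (by omega)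
    have hmem : ∀ z, z ∈ C.support → z ∈ P.support ∨ a = z ∨ b = z := by
      intro z hz
      rw [hCsup, List.mem_append] at hz
      rcases hz with hz | hz
      · exact Or.inl hz
      · simp only [List.mem_cons, List.mem_singleton, List.not_mem_nil, or_false] at hz
        rcases hz with rfl | rfl | rfl
        · exact Or.inr (Or.inr rfl)
        · exact Or.inr (Or.inl rfl)
        · exact Or.inl P.start_mem_support
    have keydist : ∀ w w', G.dist x w ≤ r → G.Adj w w' → G.dist x w' ≤ r + 1 := by
      intro w w' hw hww'
      calc G.dist x w' ≤ G.dist x w + G.dist w w' := hconn.dist_triangle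
        _ ≤ r + 1 := by
          have h1 : G.dist w w' ≤ 1 := by
            have := SimpleGraph.dist_le (Walk.cons hww' Walk.nil)
            simpa using this
          omega
    have hsvb : s(v, b) ∈ C.edges := by rw [hCed]; simp
    have hsba : s(b, a) ∈ C.edges := by rw [hCed]; simp
    have hsau : s(a, u) ∈ C.edges := by rw [hCed]; simp
    -- helper to finish from an adjacency pattern via apex_lemma
    have finA : G.Adj a v → G.Adj u v := fun hav' =>
      apex_lemma hch hconn x r P.length u v a P le_rfl hP huv ha hau hav' hxa hint
    have finB : G.Adj b u → G.Adj u v := fun hbu' =>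
      apex_lemma hch hconn x r P.length u v b P le_rfl hP huv hb hbu' hbv hxb hint
    rcases hmem c hcC with hcP | rfl | rfl
    · rcases hmem d hdC with hdP | rfl | rfl
      · have heP : s(c, d) ∉ P.edges := fun hmemE =>
          he (by rw [hCed]; exact List.mem_append_left _ hmemE)
        obtain ⟨P', hP', hsub, hlt⟩ := shortcut P hP hcP hdP hcd heP
        exact ih P'.length (lt_of_lt_of_le hlt hn) u v a b P' le_rfl hP' huv
          (fun hz => ha (hsub a hz)) (fun hz => hb (hsub b hz)) hau hbv hab hav hbu hxa hxb
          (fun z hz hle => hint z (hsub z hz) hle)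
      · -- d = a, c ∈ P
        rcases hint c hcP (keydist a c hxa hcd.symm) with rfl | rfl
        · exact absurd (by rw [Sym2.eq_swap]; exact hsau) he
        · exact finA hcd.symm
      · -- d = b, c ∈ P
        rcases hint c hcP (keydist b c hxb hcd.symm) with rfl | rfl
        · exact finB hcd.symm
        · exact absurd hsvb he
    · rcases hmem d hdC with hdP | rfl | rfl
      · -- c = a, d ∈ P
        rcases hint d hdP (keydist a d hxa hcd) with rfl | rfl
        · exact absurd hsau he
        · exact finA hcd
      · exact absurd rfl hcd.ne
      · exact absurd (by rw [Sym2.eq_swap]; exact hsba) he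
    · rcases hmem d hdC with hdP | rfl | rfl
      · -- c = b, d ∈ P
        rcases hint d hdP (keydist b d hxb hcd) with rfl | rfl
        · exact finB hcd
        · exact absurd (by rw [Sym2.eq_swap]; exact hsvb) he
      · exact absurd hsba he
      · exact absurd rfl hcd.ne

lemma main_ball_lemma (hconn : G.Connected)
    (hch : ∀ (v : V) (c : G.Walk v v), c.IsCycle → 4 ≤ c.length →
      ∃ a b : V, a ∈ c.support ∧ b ∈ c.support ∧ G.Adj a b ∧ s(a, b) ∉ c.edges)
    (x : V) :
    ∀ r : ℕ, ∀ u v : V, u ≠ v → G.dist x u ≤ r → G.dist x v ≤ r →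
      ∀ P : G.Walk u v, P.IsPath →
        (∀ z ∈ P.support, G.dist x z ≤ r → z = u ∨ z = v) → G.Adj u v := by
  intro r
  induction r with
  | zero =>
    intro u v huv hu hv P hP hball
    have h1 : G.dist x u = 0 := Nat.le_zero.mp hu
    have h2 : G.dist x v = 0 := Nat.le_zero.mp hv
    rw [hconn.dist_eq_zero_iff] at h1 h2
    exact absurd (h1 ▸ h2) huv
  | succ r ih =>
    have penult : ∀ w : V, G.dist x w = r + 1 → ∃ a, G.Adj a w ∧ G.dist x a ≤ r := by
      intro w hw
      have hne : w ≠ x := by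
        intro h
        rw [h, SimpleGraph.dist_self] at hw
        omega
      obtain ⟨p, hp⟩ := hconn.exists_walk_length_eq_dist x w
      obtain ⟨a, hadj, p', hp'⟩ := Walk.exists_eq_cons_of_ne hne p.reverse
      have hlen : p'.length = r := by
        have := congrArg Walk.length hp'
        rw [Walk.length_reverse, hp, hw] at this
        simp at this
        omega
      refine ⟨a, hadj.symm, ?_⟩
      have := SimpleGraph.dist_le p'.reverse
      rw [Walk.length_reverse, hlen] at this
      exact this
    have caseII : ∀ u v : V, ∀ P : G.Walk u v, P.IsPath → u ≠ v →
        (∀ z ∈ P.support, G.dist x z ≤ r + 1 → z = u ∨ z = v) →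
        G.dist x u = r + 1 → G.dist x v ≤ r → G.Adj u v := by
      intro u v P hP huv hball hu hv
      obtain ⟨a, hau, hxa⟩ := penult u hu
      by_cases hav : a = v
      · exact (hav ▸ hau).symm
      have haP : a ∉ P.support := by
        intro hmem
        rcases hball a hmem (le_trans hxa (Nat.le_succ r)) with rfl | rfl
        · exact hau.ne rfl
        · exact hav rfl
      have hAdjav : G.Adj a v := by
        apply ih a v hav hxa hv (Walk.cons hau P) (hP.cons haP)
        intro z hz hle
        rw [Walk.support_cons, List.mem_cons] at hz
        rcases hz with rfl | hz
        · exact Or.inl rfl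
        · rcases hball z hz (le_trans hle (Nat.le_succ r)) with rfl | rfl
          · omega
          · exact Or.inr rfl
      exact apex_lemma hch hconn x r P.length u v a P le_rfl hP huv haP hau hAdjav hxa hball
    intro u v huv hu hv P hP hball
    rcases Nat.lt_or_ge (G.dist x u) (r + 1) with hu' | hu' <;>
      rcases Nat.lt_or_ge (G.dist x v) (r + 1) with hv' | hv'
    · -- both ≤ r
      exact ih u v huv (by omega) (by omega) P hP
        (fun z hz hle => hball z hz (le_trans hle (Nat.le_succ r)))
    · -- u ≤ r, v = r+1
      exact (caseII v u P.reverse hP.reverse huv.symm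
        (by intro z hz hle
            rw [Walk.support_reverse, List.mem_reverse] at hz
            exact (hball z hz hle).symm)
        (by omega) (by omega)).symm
    · -- u = r+1, v ≤ r
      exact caseII u v P hP huv hball (by omega) (by omega)
    · -- both = r+1
      have hu'' : G.dist x u = r + 1 := by omega
      have hv'' : G.dist x v = r + 1 := by omega
      obtain ⟨a, hau, hxa⟩ := penult u hu''
      obtain ⟨b, hbv, hxb⟩ := penult v hv''
      have hav : a ≠ v := by intro h; rw [h] at hxa; omega
      have hbu : b ≠ u := by intro h; rw [h] at hxb; omega
      have haP : a ∉ P.support := by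
        intro hmem
        rcases hball a hmem (le_trans hxa (Nat.le_succ r)) with rfl | rfl
        · exact hau.ne rfl
        · exact hav rfl
      have hbP : b ∉ P.support := by
        intro hmem
        rcases hball b hmem (le_trans hxb (Nat.le_succ r)) with rfl | rfl
        · exact hbu rfl
        · exact hbv.ne rfl
      by_cases hab : a = b
      · exact apex_lemma hch hconn x r P.length u v a P le_rfl hP huv haP hau
          (hab ▸ hbv) hxa hball
      · have hAdjab : G.Adj a b := by
          apply ih a b hab hxa hxb
            (Walk.cons hau (P.append (Walk.cons hbv.symm Walk.nil))) ?_ ?_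
          · apply Walk.IsPath.mk'
            rw [Walk.support_cons, Walk.support_append]
            simp only [Walk.support_cons, Walk.support_nil, List.tail_cons, List.nodup_cons]
            constructor
            · rw [List.mem_append, List.mem_singleton]
              push_neg
              exact ⟨haP, hab⟩
            · rw [List.nodup_append]
              refine ⟨hP.support_nodup, List.nodup_singleton b, ?_⟩
              intro z hz w hz' hzw
              rw [List.mem_singleton] at hz'
              subst hz'
              subst hzw
              exact hbP hz
          · intro z hz hle
            rw [Walk.support_cons, List.mem_cons, Walk.support_append] at hz
            rcases hz with rfl | hz
            · exact Or.inl rfl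
            · rw [List.mem_append] at hz
              rcases hz with hz | hz
              · rcases hball z hz (le_trans hle (Nat.le_succ r)) with rfl | rfl
                · omega
                · omega
              · simp only [Walk.support_cons, Walk.support_nil, List.tail_cons,
                  List.mem_singleton] at hz
                exact Or.inr hz
        exact apex2_lemma hch hconn x r P.length u v a b P le_rfl hP huv haP hbP hau hbv
          hAdjab hav hbu hxa hxb hball

end AuxChordal

theorem stmt_13 {V : Type*} [Fintype V] (G : SimpleGraph V) (hconn : G.Connected)
    (hchordal : IsChordal G) (x : V) (r : ℕ) (u v : V) (huv : u ≠ v)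
    (hu : G.dist x u ≤ r) (hv : G.dist x v ≤ r)
    (P : G.Walk u v) (hP : P.IsPath)
    (hPball : ∀ z ∈ P.support, G.dist x z ≤ r → z = u ∨ z = v) :
    G.Adj u v := by
  exact main_ball_lemma hconn hchordal x r u v huv hu hv P hP hPball
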